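/- Let the Fibonacci words be defined by f₀ = b, f₁ = a, f_i = f_{i−1}f_{i−2} for i ≥ 2, over the two-letter alphabet {a, b}, with limit word f. For each n ≥ 2, the prefix φₙ of f of length F_{n+2} − 2 is a palindrome, where (Fₘ) is the Fibonacci sequence F₀ = 0, F₁ = 1, F_{m+2} = F_{m+1} + Fₘ. Moreover, φₙ = φ_{n−1}·ab·φ_{n−2} for even n ≥ 4 and φₙ = φ_{n−1}·ba·φ_{n−2} for odd n ≥ 5. -/

import Mathlib

/-- The Fibonacci words: `f₀ = b`, `f₁ = a`, `f_i = f_{i-1} f_{i-2}`. -/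
def fibWord {α : Type*} (a b : α) : ℕ → List α
  | 0 => [b]
  | 1 => [a]
  | (n + 2) => fibWord a b (n + 1) ++ fibWord a b n

/-- The prefix `φₙ` of the Fibonacci word of length `F_{n+2} - 2`. -/
def fibPrefix {α : Type*} (a b : α) (n : ℕ) : List α :=
  (fibWord a b (n + 1)).take (Nat.fib (n + 2) - 2)

section Aux
variable {α : Type*} (a b : α)

/-- the suffix of length two -/
def fibTail (a b : α) (n : ℕ) : List α := if Even n then [b, a] else [a, b]

lemma fibWord_length : ∀ n, (fibWord a b n).length = Nat.fib (n + 1)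
  | 0 => rfl
  | 1 => rfl
  | (n + 2) => by
    simp [fibWord, fibWord_length (n+1), fibWord_length n, Nat.fib_add_two]
    omega

lemma fibTail_rev (n : ℕ) : (fibTail a b (n + 1)).reverse = fibTail a b n := by
  by_cases h : Even n <;> simp [fibTail, h, Nat.even_add_one]

lemma fib_ge_two {n : ℕ} (h : 3 ≤ n) : 2 ≤ Nat.fib n := by
  calc 2 = Nat.fib 3 := rfl
    _ ≤ Nat.fib n := Nat.fib_mono h

lemma fibWord_drop : ∀ n, 1 ≤ n →
    (fibWord a b (n + 1)).drop (Nat.fib (n + 2) - 2) = fibTail a b n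
  | 1, _ => rfl
  | 2, _ => rfl
  | (n + 3), _ => by
    have h1 : 1 ≤ n + 1 := by omega
    have h2 : 2 ≤ Nat.fib (n + 3) := fib_ge_two (by omega)
    have key : Nat.fib (n + 5) - 2 = (fibWord a b (n + 3)).length + (Nat.fib (n + 3) - 2) := by
      rw [fibWord_length a b]
      have e1 : Nat.fib (n + 5) = Nat.fib (n + 3) + Nat.fib (n + 4) := Nat.fib_add_two
      have e2 : Nat.fib (n + 3 + 1) = Nat.fib (n + 4) := rfl
      omega
    show (fibWord a b (n + 3) ++ fibWord a b (n + 2)).drop (Nat.fib (n + 5) - 2) = _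
    rw [key, List.drop_length_add_append, fibWord_drop (n + 1) h1]
    simp [fibTail, Nat.even_add_one, Nat.not_even_iff_odd, parity_simps]

lemma fibWord_split (n : ℕ) (h : 1 ≤ n) :
    fibWord a b (n + 1) = fibPrefix a b n ++ fibTail a b n := by
  rw [fibPrefix, ← fibWord_drop a b n h, List.take_append_drop]

lemma fibPrefix_rec (m : ℕ) :
    fibPrefix a b (m + 3) = fibPrefix a b (m + 2) ++ fibTail a b m ++ fibPrefix a b (m + 1) := by
  have h1 : fibWord a b (m + 4) = fibWord a b (m + 3) ++ fibWord a b (m + 2) := rfl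
  rw [fibWord_split a b (m + 3) (by omega), fibWord_split a b (m + 2) (by omega),
    fibWord_split a b (m + 1) (by omega)] at h1
  have ht : fibTail a b (m + 3) = fibTail a b (m + 1) := by
    simp [fibTail, parity_simps]
  have ht2 : fibTail a b (m + 2) = fibTail a b m := by simp [fibTail, parity_simps]
  rw [ht, ht2] at h1
  have h2 : fibPrefix a b (m + 3) ++ fibTail a b (m + 1) =
      (fibPrefix a b (m + 2) ++ fibTail a b m ++ fibPrefix a b (m + 1)) ++ fibTail a b (m + 1) := by
    rw [h1]; simp [List.append_assoc]
  exact List.append_cancel_right h2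

lemma fibPrefix_two : fibPrefix a b 2 = [a] := by
  show (fibWord a b 3).take (Nat.fib 4 - 2) = [a]
  simp [fibWord, Nat.fib]

lemma fibPrefix_three : fibPrefix a b 3 = [a, b, a] := by
  show (fibWord a b 4).take (Nat.fib 5 - 2) = _
  simp [fibWord, Nat.fib]

lemma fibPrefix_four : fibPrefix a b 4 = [a, b, a, a, b, a] := by
  show (fibWord a b 5).take (Nat.fib 6 - 2) = _
  simp [fibWord, Nat.fib]

lemma fibPrefix_pal : ∀ n, 2 ≤ n → (fibPrefix a b n).reverse = fibPrefix a b n := by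
  intro n
  induction n using Nat.strong_induction_on with
  | _ n ih =>
    intro hn
    match n, hn with
    | 2, _ => simp [fibPrefix_two]
    | 3, _ => simp [fibPrefix_three]
    | 4, _ => simp [fibPrefix_four]
    | (m + 5), _ =>
      have p2 := ih (m + 2) (by omega) (by omega)
      have p3 := ih (m + 3) (by omega) (by omega)
      have p4 := ih (m + 4) (by omega) (by omega)
      have rec4 : fibPrefix a b (m + 4)
          = fibPrefix a b (m + 3) ++ fibTail a b (m + 1) ++ fibPrefix a b (m + 2) :=
        fibPrefix_rec a b (m + 1)
      have r4 : fibPrefix a b (m + 4)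
          = fibPrefix a b (m + 2) ++ fibTail a b m ++ fibPrefix a b (m + 3) := by
        conv_lhs => rw [← p4, rec4]
        simp [p2, p3, fibTail_rev, List.append_assoc]
      have r5 : fibPrefix a b (m + 5)
          = fibPrefix a b (m + 4) ++ fibTail a b m ++ fibPrefix a b (m + 3) := by
        have h := fibPrefix_rec a b (m + 2)
        have ht : fibTail a b (m + 2) = fibTail a b m := by simp [fibTail, parity_simps]
        rwa [ht] at h
      have ht : (fibTail a b m).reverse = fibTail a b (m + 1) := by
        rw [← fibTail_rev a b (m + 1)]
        simp [fibTail, parity_simps]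
      rw [r5]
      simp only [List.reverse_append, p3, p4, ht]
      conv_lhs => rw [r4]
      conv_rhs => rw [rec4]
      simp [List.append_assoc]

end Aux

/-- For `n ≥ 2`, the prefix `φₙ` of the infinite Fibonacci word of length `F_{n+2} - 2`
is a palindrome; moreover `φₙ = φ_{n-1} · ab · φ_{n-2}` for even `n ≥ 4` and
`φₙ = φ_{n-1} · ba · φ_{n-2}` for odd `n ≥ 5`.  (Each `fibWord a b (i + 1)` is indeed a
prefix of the next one, so `φₙ` is a prefix of the limit word.) -/
theorem fibPrefix_palindrome {α : Type*} (a b : α) (hab : a ≠ b) :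
    (∀ i : ℕ, 1 ≤ i → fibWord a b i <+: fibWord a b (i + 1)) ∧
    (∀ n : ℕ, 2 ≤ n → (fibPrefix a b n).reverse = fibPrefix a b n) ∧
    (∀ n : ℕ, 4 ≤ n → Even n →
      fibPrefix a b n = fibPrefix a b (n - 1) ++ [a, b] ++ fibPrefix a b (n - 2)) ∧
    (∀ n : ℕ, 5 ≤ n → Odd n →
      fibPrefix a b n = fibPrefix a b (n - 1) ++ [b, a] ++ fibPrefix a b (n - 2)) := by
  refine ⟨?_, fibPrefix_pal a b, ?_, ?_⟩
  · rintro (_ | i) h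
    · omega
    · exact ⟨fibWord a b i, rfl⟩
  · intro n hn he
    obtain ⟨m, rfl⟩ : ∃ m, n = m + 3 := ⟨n - 3, by omega⟩
    have hm : ¬ Even m := by simp [Nat.even_iff] at he ⊢; omega
    have := fibPrefix_rec a b m
    simp only [fibTail, hm, if_false] at this
    simpa using this
  · intro n hn he
    obtain ⟨m, rfl⟩ : ∃ m, n = m + 3 := ⟨n - 3, by omega⟩
    have hm : Even m := by
      have := Nat.odd_iff.mp he
      exact Nat.even_iff.mpr (by omega)
    have := fibPrefix_rec a b m
    simp only [fibTail, hm, if_true] at this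
    simpa using this
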